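/- For every l ∈ ℤ, a word w in the free monoid on the alphabet A represents the element b·x_l of S if and only if w = a^k b x_l for some integer k ≥ 0 (where a^k b x_l denotes the word consisting of k letters a followed by the letters b and x_l). -/

import Mathlib

/-- The alphabet of the monoid `S`: letters `a`, `b` and `x n`, `y n` for `n : ℤ`. -/
inductive SGen : Type
  | a : SGen
  | b : SGen
  | x : ℤ → SGen
  | y : ℤ → SGen

/-- The defining relations of `S`: `a·b·x n = b·x n` and `a·b·y n = b·y (n+1)` for `n ∈ ℤ`. -/
inductive SRel : FreeMonoid SGen → FreeMonoid SGen → Prop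
  | xr (n : ℤ) : SRel (.of .a * .of .b * .of (.x n)) (.of .b * .of (.x n))
  | yr (n : ℤ) : SRel (.of .a * .of .b * .of (.y n)) (.of .b * .of (.y (n + 1)))

/-- The monoid `S` presented by the generators `SGen` and the relations `SRel`. -/
abbrev S : Type := PresentedMonoid SRel

/-- The images of the generators in `S`. -/
def gen (g : SGen) : S := PresentedMonoid.of SRel g

/-- The principal right ideal `sS` of a monoid. -/
def rIdeal {M : Type*} [Monoid M] (s : M) : Set M := {m | ∃ u, m = s * u}

namespace SWordsAux

/-- One-step rewriting relation corresponding to `SRel` applied inside a word. -/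
def OneStep (w v : FreeMonoid SGen) : Prop :=
  ∃ p q : FreeMonoid SGen,
    (∃ n : ℤ, w = p * (.of .a * .of .b * .of (.x n)) * q ∧
        v = p * (.of .b * .of (.x n)) * q) ∨
    (∃ n : ℤ, w = p * (.of .a * .of .b * .of (.y n)) * q ∧
        v = p * (.of .b * .of (.y (n + 1))) * q)

lemma oneStep_mul_left (u : FreeMonoid SGen) {w v : FreeMonoid SGen} (h : OneStep w v) :
    OneStep (u * w) (u * v) := by
  obtain ⟨p, q, h⟩ := h
  refine ⟨u * p, q, ?_⟩
  rcases h with ⟨n, rfl, rfl⟩ | ⟨n, rfl, rfl⟩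
  · exact Or.inl ⟨n, by simp [mul_assoc], by simp [mul_assoc]⟩
  · exact Or.inr ⟨n, by simp [mul_assoc], by simp [mul_assoc]⟩

lemma oneStep_mul_right (u : FreeMonoid SGen) {w v : FreeMonoid SGen} (h : OneStep w v) :
    OneStep (w * u) (v * u) := by
  obtain ⟨p, q, h⟩ := h
  refine ⟨p, q * u, ?_⟩
  rcases h with ⟨n, rfl, rfl⟩ | ⟨n, rfl, rfl⟩
  · exact Or.inl ⟨n, by simp [mul_assoc], by simp [mul_assoc]⟩
  · exact Or.inr ⟨n, by simp [mul_assoc], by simp [mul_assoc]⟩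

lemma eqvGen_mul_left (u : FreeMonoid SGen) {w v : FreeMonoid SGen}
    (h : Relation.EqvGen OneStep w v) : Relation.EqvGen OneStep (u * w) (u * v) := by
  induction h with
  | rel _ _ h => exact Relation.EqvGen.rel _ _ (oneStep_mul_left u h)
  | refl _ => exact Relation.EqvGen.refl _
  | symm _ _ _ ih => exact ih.symm _ _
  | trans _ _ _ _ _ ih₁ ih₂ => exact ih₁.trans _ _ _ ih₂

lemma eqvGen_mul_right (u : FreeMonoid SGen) {w v : FreeMonoid SGen}
    (h : Relation.EqvGen OneStep w v) : Relation.EqvGen OneStep (w * u) (v * u) := by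
  induction h with
  | rel _ _ h => exact Relation.EqvGen.rel _ _ (oneStep_mul_right u h)
  | refl _ => exact Relation.EqvGen.refl _
  | symm _ _ _ ih => exact ih.symm _ _
  | trans _ _ _ _ _ ih₁ ih₂ => exact ih₁.trans _ _ _ ih₂

/-- The congruence generated by the one-step rewriting relation. -/
def stepCon : Con (FreeMonoid SGen) where
  r := Relation.EqvGen OneStep
  iseqv := Relation.EqvGen.is_equivalence _
  mul' {a b c d} h₁ h₂ :=
    (eqvGen_mul_right c h₁).trans _ _ _ (eqvGen_mul_left b h₂)

lemma conGen_le_stepCon : conGen SRel ≤ stepCon := by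
  refine Con.conGen_le.mpr fun w v h => ?_
  cases h with
  | xr n => exact Relation.EqvGen.rel _ _ ⟨1, 1, Or.inl ⟨n, by simp, by simp⟩⟩
  | yr n => exact Relation.EqvGen.rel _ _ ⟨1, 1, Or.inr ⟨n, by simp, by simp⟩⟩

/-- The normal-form predicate: the word is `aᵏ b xₗ`. -/
def P (l : ℤ) (w : List SGen) : Prop :=
  ∃ k : ℕ, w = List.replicate k SGen.a ++ [SGen.b, SGen.x l]

lemma key1 (l n : ℤ) : ∀ (p : List SGen) (k : ℕ) (q : List SGen),
    p ++ SGen.a :: SGen.b :: SGen.x n :: q = List.replicate k SGen.a ++ [SGen.b, SGen.x l] →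
    n = l ∧ q = [] ∧ ∃ j, p = List.replicate j SGen.a ∧ k = j + 1 := by
  intro p
  induction p with
  | nil =>
    intro k q h
    match k with
    | 0 => simp at h
    | 1 =>
      simp [List.replicate] at h
      obtain ⟨rfl, rfl⟩ := h
      exact ⟨rfl, rfl, 0, by simp⟩
    | (k + 2) => simp [List.replicate] at h
  | cons g p ih =>
    intro k q h
    match k with
    | 0 =>
      simp at h
      obtain ⟨rfl, h⟩ := h
      have := congrArg List.length h
      simp at this
      omega
    | (k + 1) =>
      simp [List.replicate_succ] at h
      obtain ⟨rfl, h⟩ := h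
      obtain ⟨h1, h2, j, rfl, rfl⟩ := ih k q h
      exact ⟨h1, h2, j + 1, by simp [List.replicate_succ], rfl⟩

lemma key2 (l n : ℤ) : ∀ (p : List SGen) (k : ℕ) (q : List SGen),
    p ++ SGen.b :: SGen.x n :: q = List.replicate k SGen.a ++ [SGen.b, SGen.x l] →
    n = l ∧ q = [] ∧ p = List.replicate k SGen.a := by
  intro p
  induction p with
  | nil =>
    intro k q h
    match k with
    | 0 =>
      simp at h
      obtain ⟨rfl, rfl⟩ := h
      exact ⟨rfl, rfl, rfl⟩
    | (k + 1) => simp [List.replicate_succ] at h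
  | cons g p ih =>
    intro k q h
    match k with
    | 0 =>
      simp at h
      obtain ⟨rfl, h⟩ := h
      have := congrArg List.length h
      simp at this
      omega
    | (k + 1) =>
      simp [List.replicate_succ] at h
      obtain ⟨rfl, h⟩ := h
      obtain ⟨h1, h2, h3⟩ := ih k q h
      exact ⟨h1, h2, by simp [List.replicate_succ, h3]⟩

lemma y_not_mem (l : ℤ) (m : ℤ) (k : ℕ) :
    SGen.y m ∉ List.replicate k SGen.a ++ [SGen.b, SGen.x l] := by
  simp [List.mem_replicate]

lemma step_iff (l : ℤ) {w v : FreeMonoid SGen} (h : OneStep w v) :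
    P l w.toList ↔ P l v.toList := by
  obtain ⟨p, q, h⟩ := h
  rcases h with ⟨n, rfl, rfl⟩ | ⟨n, rfl, rfl⟩
  · constructor
    · rintro ⟨k, hk⟩
      simp only [FreeMonoid.toList_mul, FreeMonoid.toList_of, List.append_assoc,
        List.cons_append, List.nil_append] at hk ⊢
      obtain ⟨h1, h2, j, h3, h4⟩ := key1 l n p.toList k q.toList hk
      exact ⟨j, by simp [h1, h2, h3]⟩
    · rintro ⟨k, hk⟩
      simp only [FreeMonoid.toList_mul, FreeMonoid.toList_of, List.append_assoc,
        List.cons_append, List.nil_append] at hk ⊢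
      obtain ⟨h1, h2, h3⟩ := key2 l n p.toList k q.toList hk
      refine ⟨k + 1, ?_⟩
      simp [h1, h2, h3, List.replicate_succ' (n := k)]
  · constructor
    · rintro ⟨k, hk⟩
      exfalso
      refine y_not_mem l n k ?_
      rw [← hk]
      simp [FreeMonoid.toList_mul, FreeMonoid.toList_of]
    · rintro ⟨k, hk⟩
      exfalso
      refine y_not_mem l (n + 1) k ?_
      rw [← hk]
      simp [FreeMonoid.toList_mul, FreeMonoid.toList_of]

lemma eqvGen_iff (l : ℤ) {w v : FreeMonoid SGen} (h : Relation.EqvGen OneStep w v) :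
    P l w.toList ↔ P l v.toList := by
  induction h with
  | rel _ _ h => exact step_iff l h
  | refl _ => exact Iff.rfl
  | symm _ _ _ ih => exact ih.symm
  | trans _ _ _ _ _ ih₁ ih₂ => exact ih₁.trans ih₂

end SWordsAux

/-- A word `w` in the free monoid on the alphabet represents `b·xₗ` in `S` if and only if
`w = aᵏ b xₗ` for some `k ≥ 0`. -/
theorem S_words_for_bx (l : ℤ) (w : FreeMonoid SGen) :
    PresentedMonoid.mk SRel w = gen .b * gen (.x l) ↔
      ∃ k : ℕ, w = FreeMonoid.of SGen.a ^ k * FreeMonoid.of SGen.b * FreeMonoid.of (SGen.x l) := by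
  have hpow : ∀ k : ℕ, FreeMonoid.toList (FreeMonoid.of SGen.a ^ k) =
      List.replicate k SGen.a := by
    intro k
    induction k with
    | zero => rfl
    | succ k ih => rw [pow_succ', FreeMonoid.toList_of_mul, ih, ← List.replicate_succ]
  have hmain : ∀ u : FreeMonoid SGen, (∃ k : ℕ,
      u = FreeMonoid.of SGen.a ^ k * FreeMonoid.of SGen.b * FreeMonoid.of (SGen.x l)) ↔
      SWordsAux.P l u.toList := by
    intro u
    constructor
    · rintro ⟨k, rfl⟩
      exact ⟨k, by simp [FreeMonoid.toList_mul, hpow]⟩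
    · rintro ⟨k, hk⟩
      refine ⟨k, FreeMonoid.toList.injective ?_⟩
      simp [FreeMonoid.toList_mul, hpow, hk]
  have hgen : gen SGen.b * gen (SGen.x l) =
      PresentedMonoid.mk SRel (FreeMonoid.of SGen.b * FreeMonoid.of (SGen.x l)) := by
    simp [gen, PresentedMonoid.of, map_mul]
  constructor
  · intro h
    rw [hgen] at h
    have hc : conGen SRel w (FreeMonoid.of SGen.b * FreeMonoid.of (SGen.x l)) :=
      Quotient.exact h
    have hs : SWordsAux.stepCon w (FreeMonoid.of SGen.b * FreeMonoid.of (SGen.x l)) :=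
      SWordsAux.conGen_le_stepCon hc
    refine (hmain w).mpr ((SWordsAux.eqvGen_iff l hs).mpr ?_)
    exact ⟨0, rfl⟩
  · rintro ⟨k, rfl⟩
    rw [hgen]
    induction k with
    | zero => simp
    | succ k ih =>
      have h1 : FreeMonoid.of SGen.a ^ (k + 1) * FreeMonoid.of SGen.b * FreeMonoid.of (SGen.x l)
          = FreeMonoid.of SGen.a *
            (FreeMonoid.of SGen.a ^ k * FreeMonoid.of SGen.b * FreeMonoid.of (SGen.x l)) := by
        rw [pow_succ']
        simp [mul_assoc]
      have h2 : conGen SRel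
          (FreeMonoid.of SGen.a * (FreeMonoid.of SGen.b * FreeMonoid.of (SGen.x l)))
          (FreeMonoid.of SGen.b * FreeMonoid.of (SGen.x l)) := by
        have := ConGen.Rel.of _ _ (SRel.xr l)
        rwa [mul_assoc] at this
      calc PresentedMonoid.mk SRel
            (FreeMonoid.of SGen.a ^ (k + 1) * FreeMonoid.of SGen.b * FreeMonoid.of (SGen.x l))
          = PresentedMonoid.mk SRel (FreeMonoid.of SGen.a) * PresentedMonoid.mk SRel
            (FreeMonoid.of SGen.a ^ k * FreeMonoid.of SGen.b * FreeMonoid.of (SGen.x l)) := by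
            rw [h1, map_mul]
        _ = PresentedMonoid.mk SRel (FreeMonoid.of SGen.a) *
            PresentedMonoid.mk SRel (FreeMonoid.of SGen.b * FreeMonoid.of (SGen.x l)) := by
            rw [ih]
        _ = PresentedMonoid.mk SRel
            (FreeMonoid.of SGen.a * (FreeMonoid.of SGen.b * FreeMonoid.of (SGen.x l))) :=
            (map_mul _ _ _).symm
        _ = PresentedMonoid.mk SRel (FreeMonoid.of SGen.b * FreeMonoid.of (SGen.x l)) :=
            Quotient.sound h2
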